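/- Let G = (V,E) be a strongly connected digraph with unweighted diameter d, let P be a normalized flow on E (nonnegative, supported on E, total flow 1), and let imb(P) := ‖P𝟏 - Pᵀ𝟏‖₁. Then there exists a normalized circulation F (F ∈ Δ_E with F𝟏 = Fᵀ𝟏) satisfying ‖F - P‖₁ ≤ 2 d · imb(P). -/

import Mathlib

open Finset

/-- A directed cycle: a nonempty list of distinct vertices whose consecutive
pairs (cyclically) are edges of `E`. -/
def IsCycle {n : ℕ} (E : Finset (Fin n × Fin n)) (c : List (Fin n)) : Prop :=
  c ≠ [] ∧ c.Nodup ∧ ∀ p ∈ c.zip (c.rotate 1), p ∈ E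

/-- Mean weight of a cycle. -/
noncomputable def meanWeight {n : ℕ} (w : Fin n × Fin n → ℝ) (c : List (Fin n)) : ℝ :=
  ((c.zip (c.rotate 1)).map w).sum / c.length

/-- Min-mean-cycle value of the digraph `(V, E, w)`. -/
noncomputable def mmc {n : ℕ} (E : Finset (Fin n × Fin n)) (w : Fin n × Fin n → ℝ) : ℝ :=
  sInf {x : ℝ | ∃ c, IsCycle E c ∧ meanWeight w c = x}

/-- Membership in `Δ_E`: a nonnegative matrix supported on `E` with total sum 1. -/
def InDeltaE {n : ℕ} (E : Finset (Fin n × Fin n)) (P : Matrix (Fin n) (Fin n) ℝ) : Prop :=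
  (∀ i j, 0 ≤ P i j) ∧ (∀ i j, (i, j) ∉ E → P i j = 0) ∧ (∑ i, ∑ j, P i j) = 1

/-- A circulation: netflow is balanced at every vertex. -/
def IsBalanced {n : ℕ} (P : Matrix (Fin n) (Fin n) ℝ) : Prop :=
  ∀ i, (∑ j, P i j) = ∑ j, P j i

/-- Total netflow imbalance `‖P𝟏 - Pᵀ𝟏‖₁`. -/
noncomputable def imb {n : ℕ} (P : Matrix (Fin n) (Fin n) ℝ) : ℝ :=
  ∑ i, |(∑ j, P i j) - ∑ j, P j i|

/-- Entrywise ℓ₁ norm of a matrix. -/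
noncomputable def l1 {n : ℕ} (P : Matrix (Fin n) (Fin n) ℝ) : ℝ :=
  ∑ i, ∑ j, |P i j|

/-- There is a directed path from `i` to `j` of length at most `d`. -/
def ConnectsWithin {n : ℕ} (E : Finset (Fin n × Fin n)) (d : ℕ) (i j : Fin n) : Prop :=
  ∃ l : List (Fin n), l.length ≤ d ∧ List.Chain (fun a b => (a, b) ∈ E) i l ∧
    (i :: l).getLast (List.cons_ne_nil _ _) = j

/-- A directed walk from `s` to `v` along edges of `E`, recorded by its
list of vertices after `s`. -/
def IsWalkFrom {n : ℕ} (E : Finset (Fin n × Fin n)) (s v : Fin n) (l : List (Fin n)) : Prop :=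
  List.Chain (fun a b => (a, b) ∈ E) s l ∧ (s :: l).getLast (List.cons_ne_nil _ _) = v

/-- Weight of a walk. -/
noncomputable def walkWeight {n : ℕ} (w : Fin n × Fin n → ℝ) (s : Fin n) (l : List (Fin n)) : ℝ :=
  (((s :: l).zip l).map w).sum

namespace RoundAux
variable {n : ℕ}

def single (a b : Fin n) : Matrix (Fin n) (Fin n) ℝ :=
  fun x y => if x = a ∧ y = b then 1 else 0

def walkMat : Fin n → List (Fin n) → Matrix (Fin n) (Fin n) ℝ
  | _, [] => 0
  | s, b :: l => single s b + walkMat b l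

lemma single_nonneg (a b x y : Fin n) : 0 ≤ single a b x y := by
  unfold single; split <;> norm_num

lemma walkMat_nonneg (s : Fin n) (l : List (Fin n)) (a b : Fin n) :
    0 ≤ walkMat s l a b := by
  induction l generalizing s with
  | nil => simp [walkMat]
  | cons c l ih =>
    simpa [walkMat] using add_nonneg (single_nonneg s c a b) (ih c)

lemma walkMat_support (E : Finset (Fin n × Fin n)) (s : Fin n) (l : List (Fin n))
    (h : List.Chain (fun a b => (a, b) ∈ E) s l) (a b : Fin n) (hab : (a, b) ∉ E) :
    walkMat s l a b = 0 := by
  induction l generalizing s with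
  | nil => simp [walkMat]
  | cons c l ih =>
    rcases List.chain_cons.1 h with ⟨hsc, hcl⟩
    have h1 : single s c a b = 0 := by
      unfold single
      split
      · rename_i hh; exact absurd (hh.1 ▸ hh.2 ▸ hsc) hab
      · rfl
    simp [walkMat, h1, ih c hcl]

lemma sum_single_row (a b i : Fin n) : ∑ j, single a b i j = if i = a then 1 else 0 := by
  simp [single, ite_and]

lemma sum_single_col (a b i : Fin n) : ∑ j, single a b j i = if i = b then 1 else 0 := by
  simp [single, ite_and]

lemma walkMat_sum (s : Fin n) (l : List (Fin n)) :
    ∑ a, ∑ b, walkMat s l a b = l.length := by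
  induction l generalizing s with
  | nil => simp [walkMat]
  | cons c l ih =>
    simp only [walkMat, Matrix.add_apply, Finset.sum_add_distrib, ih c]
    have h1 : ∑ a, ∑ b, single s c a b = 1 := by
      simp [sum_single_row]
    rw [h1]
    simp
    ring

lemma walkMat_div (s : Fin n) (l : List (Fin n)) (i : Fin n) :
    (∑ j, walkMat s l i j) - ∑ j, walkMat s l j i
      = (if i = s then 1 else 0)
        - (if i = (s :: l).getLast (List.cons_ne_nil _ _) then 1 else 0) := by
  induction l generalizing s with
  | nil => simp [walkMat]; split_ifs <;> simp_all
  | cons c l ih =>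
    have hlast : (s :: c :: l).getLast (List.cons_ne_nil _ _)
        = (c :: l).getLast (List.cons_ne_nil _ _) := by
      simp [List.getLast]
    simp only [walkMat, Matrix.add_apply, Finset.sum_add_distrib, hlast]
    rw [sum_single_row, sum_single_col]
    linarith [ih c]

lemma sum_sum_comm (f : Fin n → Fin n → Fin n → ℝ) :
    ∑ a, ∑ b, ∑ k, f a b k = ∑ k, ∑ a, ∑ b, f a b k := by
  have h1 : ∀ a : Fin n, ∑ b, ∑ k, f a b k = ∑ k, ∑ b, f a b k := fun a =>
    Finset.sum_comm
  rw [Finset.sum_congr rfl (fun a _ => h1 a), Finset.sum_comm]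

end RoundAux


set_option maxHeartbeats 1000000 in
open RoundAux in
/-- **Rounding a near-circulation to a circulation.** If `G` is strongly connected
with (unweighted) diameter at most `d` and `P ∈ Δ_E`, then there is a normalized
circulation `F ∈ F_E` with `‖F - P‖₁ ≤ 2 d · imb(P)`. -/
theorem round_to_circulation {n : ℕ} (E : Finset (Fin n × Fin n)) (d : ℕ)
    (hconn : ∀ i j : Fin n, ConnectsWithin E d i j)
    (P : Matrix (Fin n) (Fin n) ℝ) (hP : InDeltaE E P) :
    ∃ F : Matrix (Fin n) (Fin n) ℝ, InDeltaE E F ∧ IsBalanced F ∧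
      l1 (F - P) ≤ 2 * d * imb P := by
  obtain ⟨hPnn, hPsupp, hPsum⟩ := hP
  rcases Nat.eq_zero_or_pos n with hn | hn
  · exfalso; subst hn; simp at hPsum
  set r : Fin n := ⟨0, hn⟩ with hr
  set s : Fin n → ℝ := fun i => (∑ j, P i j) - ∑ j, P j i with hsdef
  have hsum_s : ∑ i, s i = 0 := by
    simp only [hsdef, Finset.sum_sub_distrib]
    rw [Finset.sum_comm]
    ring
  choose lt hltlen hltch hltlast using fun i => hconn r i
  choose lf hlflen hlfch hlflast using fun i => hconn i r
  set x : Fin n → ℝ := fun k => max (s k) 0 with hx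
  set y : Fin n → ℝ := fun k => max (-(s k)) 0 with hy
  have hxnn : ∀ k, 0 ≤ x k := fun k => le_max_right _ _
  have hynn : ∀ k, 0 ≤ y k := fun k => le_max_right _ _
  have habs : ∀ k, x k + y k = |s k| := by
    intro k; simp only [hx, hy]
    rcases le_total (s k) 0 with h | h
    · rw [abs_of_nonpos h, max_eq_right h, max_eq_left (by linarith)]; ring
    · rw [abs_of_nonneg h, max_eq_left h, max_eq_right (by linarith)]; ring
  have hsub : ∀ k, x k - y k = s k := by
    intro k; simp only [hx, hy]
    rcases le_total (s k) 0 with h | h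
    · rw [max_eq_right h, max_eq_left (by linarith)]; ring
    · rw [max_eq_left h, max_eq_right (by linarith)]; ring
  set C : Matrix (Fin n) (Fin n) ℝ := fun a b =>
    ∑ k, (x k * walkMat r (lt k) a b + y k * walkMat k (lf k) a b) with hC
  have hCnn : ∀ a b, 0 ≤ C a b := by
    intro a b
    apply Finset.sum_nonneg
    intro k _
    have h1 := walkMat_nonneg r (lt k) a b
    have h2 := walkMat_nonneg k (lf k) a b
    have := hxnn k; have := hynn k
    positivity
  have hCsupp : ∀ a b, (a, b) ∉ E → C a b = 0 := by
    intro a b hab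
    apply Finset.sum_eq_zero
    intro k _
    rw [walkMat_support E r (lt k) (hltch k) a b hab,
      walkMat_support E k (lf k) (hlfch k) a b hab]
    ring
  set cs : ℝ := ∑ a, ∑ b, C a b with hcs
  have himb : imb P = ∑ i, |s i| := rfl
  have hcs_eq : cs = ∑ k, (x k * (lt k).length + y k * (lf k).length) := by
    rw [hcs]
    show ∑ a, ∑ b, ∑ k, (x k * walkMat r (lt k) a b + y k * walkMat k (lf k) a b) = _
    rw [sum_sum_comm]
    apply Finset.sum_congr rfl
    intro k _
    rw [← walkMat_sum r (lt k), ← walkMat_sum k (lf k)]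
    simp only [Finset.sum_add_distrib, ← Finset.mul_sum]
  have hcs_bound : cs ≤ d * imb P := by
    rw [hcs_eq, himb, Finset.mul_sum]
    apply Finset.sum_le_sum
    intro k _
    have h1 : (↑(lt k).length : ℝ) ≤ d := by exact_mod_cast hltlen k
    have h2 : (↑(lf k).length : ℝ) ≤ d := by exact_mod_cast hlflen k
    have m1 := hxnn k; have m2 := hynn k
    have := habs k
    nlinarith
  have hcs_nn : 0 ≤ cs := by
    apply Finset.sum_nonneg; intro a _; apply Finset.sum_nonneg; intro b _; exact hCnn a b
  -- divergence of C
  have hdivC : ∀ i, (∑ j, C i j) - ∑ j, C j i = -(s i) := by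
    intro i
    have hrow : ∑ j, C i j = ∑ k, (x k * ∑ j, walkMat r (lt k) i j
        + y k * ∑ j, walkMat k (lf k) i j) := by
      show ∑ j, ∑ k, _ = _
      rw [Finset.sum_comm]
      apply Finset.sum_congr rfl
      intro k _
      simp only [Finset.sum_add_distrib, ← Finset.mul_sum]
    have hcol : ∑ j, C j i = ∑ k, (x k * ∑ j, walkMat r (lt k) j i
        + y k * ∑ j, walkMat k (lf k) j i) := by
      show ∑ j, ∑ k, _ = _
      rw [Finset.sum_comm]
      apply Finset.sum_congr rfl
      intro k _
      simp only [Finset.sum_add_distrib, ← Finset.mul_sum]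
    rw [hrow, hcol, ← Finset.sum_sub_distrib]
    have key : ∀ k : Fin n, x k * (∑ j, walkMat r (lt k) i j)
          + y k * (∑ j, walkMat k (lf k) i j)
          - (x k * (∑ j, walkMat r (lt k) j i) + y k * (∑ j, walkMat k (lf k) j i))
        = s k * (if i = r then 1 else 0) - s k * (if i = k then 1 else 0) := by
      intro k
      have d1 := walkMat_div r (lt k) i
      have d2 := walkMat_div k (lf k) i
      rw [hltlast k] at d1
      rw [hlflast k] at d2
      have hs := hsub k
      calc x k * (∑ j, walkMat r (lt k) i j) + y k * (∑ j, walkMat k (lf k) i j)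
            - (x k * (∑ j, walkMat r (lt k) j i) + y k * (∑ j, walkMat k (lf k) j i))
          = x k * ((∑ j, walkMat r (lt k) i j) - ∑ j, walkMat r (lt k) j i)
            + y k * ((∑ j, walkMat k (lf k) i j) - ∑ j, walkMat k (lf k) j i) := by ring
        _ = x k * ((if i = r then 1 else 0) - (if i = k then 1 else 0))
            + y k * ((if i = k then 1 else 0) - (if i = r then 1 else 0)) := by rw [d1, d2]
        _ = (x k - y k) * ((if i = r then 1 else 0) - (if i = k then 1 else 0)) := by ring
        _ = s k * (if i = r then 1 else 0) - s k * (if i = k then 1 else 0) := by rw [hs]; ring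
    rw [Finset.sum_congr rfl (fun k _ => key k), Finset.sum_sub_distrib]
    rw [← Finset.sum_mul, hsum_s]
    have : ∑ k, s k * (if i = k then (1:ℝ) else 0) = s i := by
      simp [mul_ite]
    rw [this]
    ring
  -- build F
  set T : ℝ := 1 + cs with hT
  have hT1 : 1 ≤ T := by simp [hT]; linarith
  have hTpos : 0 < T := by linarith
  clear_value C cs T
  refine ⟨fun a b => T⁻¹ * (P a b + C a b), ⟨?_, ?_, ?_⟩, ?_, ?_⟩
  · intro i j
    show 0 ≤ T⁻¹ * (P i j + C i j)
    have := hPnn i j; have := hCnn i j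
    positivity
  · intro i j hij
    show T⁻¹ * (P i j + C i j) = 0
    rw [hPsupp i j hij, hCsupp i j hij]
    ring
  · show ∑ i, ∑ j, T⁻¹ * (P i j + C i j) = 1
    have : ∑ i, ∑ j, T⁻¹ * (P i j + C i j)
        = T⁻¹ * ((∑ i, ∑ j, P i j) + ∑ i, ∑ j, C i j) := by
      simp only [Finset.mul_sum, Finset.sum_add_distrib, mul_add]
    rw [this, hPsum, ← hcs, ← hT]
    exact inv_mul_cancel₀ (ne_of_gt hTpos)
  · intro i
    show ∑ j, T⁻¹ * (P i j + C i j) = ∑ j, T⁻¹ * (P j i + C j i)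
    have hbal : (∑ j, (P i j + C i j)) = ∑ j, (P j i + C j i) := by
      have h1 := hdivC i
      have h2 : (∑ j, P i j) - ∑ j, P j i = s i := rfl
      simp only [Finset.sum_add_distrib]
      linarith
    calc ∑ j, T⁻¹ * (P i j + C i j) = T⁻¹ * ∑ j, (P i j + C i j) := by
          rw [Finset.mul_sum]
      _ = T⁻¹ * ∑ j, (P j i + C j i) := by rw [hbal]
      _ = ∑ j, T⁻¹ * (P j i + C j i) := by rw [Finset.mul_sum]
  · -- l1 bound
    have hent : ∀ a b, |T⁻¹ * (P a b + C a b) - P a b|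
        ≤ T⁻¹ * C a b + (1 - T⁻¹) * P a b := by
      intro a b
      have hinv1 : T⁻¹ ≤ 1 := by
        rw [inv_le_one_iff₀]; right; exact hT1
      have hinvnn : 0 ≤ T⁻¹ := by positivity
      have e : T⁻¹ * (P a b + C a b) - P a b = T⁻¹ * C a b - (1 - T⁻¹) * P a b := by ring
      rw [e]
      have h1 : 0 ≤ T⁻¹ * C a b := by have := hCnn a b; positivity
      have h2 : 0 ≤ (1 - T⁻¹) * P a b := by
        have := hPnn a b; nlinarith
      rw [abs_sub_le_iff]
      constructor <;> linarith
    have hl1 : l1 ((show Matrix (Fin n) (Fin n) ℝ from fun a b => T⁻¹ * (P a b + C a b)) - P)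
        ≤ T⁻¹ * cs + (1 - T⁻¹) := by
      unfold l1
      have step : ∀ a, ∑ b, |((show Matrix (Fin n) (Fin n) ℝ from fun a b => T⁻¹ * (P a b + C a b)) - P) a b|
          ≤ ∑ b, (T⁻¹ * C a b + (1 - T⁻¹) * P a b) := by
        intro a
        apply Finset.sum_le_sum
        intro b _
        have : ((show Matrix (Fin n) (Fin n) ℝ from fun a b => T⁻¹ * (P a b + C a b)) - P) a b
            = T⁻¹ * (P a b + C a b) - P a b := rfl
        rw [this]
        exact hent a b
      calc ∑ a, ∑ b, |((show Matrix (Fin n) (Fin n) ℝ from fun a b => T⁻¹ * (P a b + C a b)) - P) a b|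
          ≤ ∑ a, ∑ b, (T⁻¹ * C a b + (1 - T⁻¹) * P a b) :=
            Finset.sum_le_sum (fun a _ => step a)
        _ = T⁻¹ * (∑ a, ∑ b, C a b) + (1 - T⁻¹) * (∑ a, ∑ b, P a b) := by
            simp only [Finset.sum_add_distrib, Finset.mul_sum]
        _ = T⁻¹ * cs + (1 - T⁻¹) := by rw [← hcs, hPsum]; ring
    have hfinal : T⁻¹ * cs + (1 - T⁻¹) ≤ 2 * d * imb P := by
      have hinv1 : T⁻¹ ≤ 1 := by
        rw [inv_le_one_iff₀]; right; exact hT1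
      have hinvnn : 0 ≤ T⁻¹ := by positivity
      have h1 : T⁻¹ * cs ≤ cs := by nlinarith
      have h2 : 1 - T⁻¹ = cs * T⁻¹ := by
        field_simp [hT]
        linarith
      have h3 : cs * T⁻¹ ≤ cs := by nlinarith
      have himbnn : 0 ≤ imb P := Finset.sum_nonneg (fun i _ => abs_nonneg _)
      nlinarith [hcs_bound]
    exact le_trans hl1 hfinal
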